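/- In dimension 4, define a bracket by [e₁,e₂] = (a+b)e₂, [e₃,e₄] = c·e₂, [e₁,e₃] = a·e₃ + β·e₄, [e₁,e₄] = α·e₃ + b·e₄ (all other basis brackets zero), for arbitrary real parameters a, b, c, α, β. Then this bracket satisfies the Jacobi identity, so it defines a solvable Lie algebra. -/

import Mathlib

set_option maxHeartbeats 2000000 in
/-- In dimension 4, the bracket `⁅e₁,e₂⁆ = (a+b)e₂`, `⁅e₃,e₄⁆ = c e₂`,
`⁅e₁,e₃⁆ = a e₃ + β e₄`, `⁅e₁,e₄⁆ = α e₃ + b e₄` (all other basis brackets zero),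
for arbitrary real parameters `a, b, c, α, β`, satisfies the Jacobi identity, and the
resulting Lie algebra is solvable (its third derived algebra vanishes). -/
theorem dim4_solvable_family_jacobi
    (V : Type*) [AddCommGroup V] [Module ℝ V]
    (b : Module.Basis (Fin 4) ℝ V)
    (μ : V →ₗ[ℝ] V →ₗ[ℝ] V)
    (halt : ∀ x y : V, μ x y = - μ y x)
    (a b' c α β : ℝ)
    (h12 : μ (b 0) (b 1) = (a + b') • b 1)
    (h34 : μ (b 2) (b 3) = c • b 1)
    (h13 : μ (b 0) (b 2) = a • b 2 + β • b 3)
    (h14 : μ (b 0) (b 3) = α • b 2 + b' • b 3)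
    (h23 : μ (b 1) (b 2) = 0)
    (h24 : μ (b 1) (b 3) = 0) :
    (∀ x y z : V, μ x (μ y z) + μ y (μ z x) + μ z (μ x y) = 0) ∧
    (∀ x1 x2 x3 x4 x5 x6 x7 x8 : V,
      μ (μ (μ x1 x2) (μ x3 x4)) (μ (μ x5 x6) (μ x7 x8)) = 0) := by
  have hself : ∀ x : V, μ x x = 0 := by
    intro x
    have h := halt x x
    have h2 : (2 : ℝ) • μ x x = 0 := by
      rw [two_smul]
      nth_rewrite 2 [h]
      exact add_neg_cancel _
    simpa using (smul_eq_zero.mp h2).resolve_left (by norm_num)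
  have h21 : μ (b 1) (b 0) = -((a + b') • b 1) := by rw [halt, h12]
  have h31 : μ (b 2) (b 0) = -(a • b 2 + β • b 3) := by rw [halt, h13]
  have h41 : μ (b 3) (b 0) = -(α • b 2 + b' • b 3) := by rw [halt, h14]
  have h43 : μ (b 3) (b 2) = -(c • b 1) := by rw [halt, h34]
  have h32 : μ (b 2) (b 1) = 0 := by rw [halt, h23, neg_zero]
  have h42 : μ (b 3) (b 1) = 0 := by rw [halt, h24, neg_zero]
  constructor
  · -- Jacobi identity
    set T : V →ₗ[ℝ] V →ₗ[ℝ] V →ₗ[ℝ] V :=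
      ((LinearMap.llcomp ℝ V V V).comp μ).compl₂ μ
        - (((LinearMap.llcomp ℝ V V V).comp μ).compl₂ μ).flip
        + ((LinearMap.llcomp ℝ V V (V →ₗ[ℝ] V) μ.flip).comp μ) with hTdef
    have hTapp : ∀ x y z : V,
        T x y z = μ x (μ y z) - μ y (μ x z) + μ z (μ x y) := by
      intro x y z
      simp [hTdef]
    have hT : T = 0 := by
      apply b.ext
      intro i
      apply b.ext
      intro j
      apply b.ext
      intro k
      fin_cases i <;> fin_cases j <;> fin_cases k <;>
        simp [hTapp, h12, h13, h14, h34, h23, h24, h21, h31, h41, h43, h32, h42, hself,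
          smul_smul, smul_add, smul_sub, sub_eq_add_neg] <;>
        module
    intro x y z
    have := congrFun (congrArg DFunLike.coe
      (congrFun (congrArg DFunLike.coe (congrFun (congrArg DFunLike.coe hT) x)) y)) z
    rw [hTapp] at this
    simp only [LinearMap.zero_apply] at this
    rw [halt z x, map_neg]
    linear_combination (norm := abel) this
  · -- solvability: third derived bracket vanishes
    set W : Submodule ℝ V := Submodule.span ℝ {b 1, b 2, b 3} with hW
    set U : Submodule ℝ V := Submodule.span ℝ {b 1} with hU
    have hb1 : b 1 ∈ W := Submodule.subset_span (by simp)
    have hb2 : b 2 ∈ W := Submodule.subset_span (by simp)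
    have hb3 : b 3 ∈ W := Submodule.subset_span (by simp)
    have hA : ∀ x y : V, μ x y ∈ W := by
      have hz : μ.compr₂ W.mkQ = 0 := by
        apply b.ext
        intro i
        apply b.ext
        intro j
        have hw : ∀ v : V, v ∈ W → W.mkQ v = 0 := by
          intro v hv
          simpa [Submodule.Quotient.mk_eq_zero] using hv
        have hm11 : ∀ i : Fin 4, μ (b i) (b i) ∈ W := fun i => by
          rw [hself]; exact W.zero_mem
        have hm12 : μ (b 0) (b 1) ∈ W := by rw [h12]; exact W.smul_mem _ hb1
        have hm13 : μ (b 0) (b 2) ∈ W := by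
          rw [h13]; exact W.add_mem (W.smul_mem _ hb2) (W.smul_mem _ hb3)
        have hm14 : μ (b 0) (b 3) ∈ W := by
          rw [h14]; exact W.add_mem (W.smul_mem _ hb2) (W.smul_mem _ hb3)
        have hm21 : μ (b 1) (b 0) ∈ W := by rw [h21]; exact W.neg_mem (W.smul_mem _ hb1)
        have hm31 : μ (b 2) (b 0) ∈ W := by
          rw [h31]; exact W.neg_mem (W.add_mem (W.smul_mem _ hb2) (W.smul_mem _ hb3))
        have hm41 : μ (b 3) (b 0) ∈ W := by
          rw [h41]; exact W.neg_mem (W.add_mem (W.smul_mem _ hb2) (W.smul_mem _ hb3))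
        have hm34 : μ (b 2) (b 3) ∈ W := by rw [h34]; exact W.smul_mem _ hb1
        have hm43 : μ (b 3) (b 2) ∈ W := by rw [h43]; exact W.neg_mem (W.smul_mem _ hb1)
        have hm23 : μ (b 1) (b 2) ∈ W := by rw [h23]; exact W.zero_mem
        have hm24 : μ (b 1) (b 3) ∈ W := by rw [h24]; exact W.zero_mem
        have hm32 : μ (b 2) (b 1) ∈ W := by rw [h32]; exact W.zero_mem
        have hm42 : μ (b 3) (b 1) ∈ W := by rw [h42]; exact W.zero_mem
        fin_cases i <;> fin_cases j <;>
          simp only [LinearMap.compr₂_apply, LinearMap.zero_apply, Fin.isValue] <;>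
          apply hw <;>
          first
            | exact hm11 0 | exact hm11 1 | exact hm11 2 | exact hm11 3
            | exact hm12 | exact hm13 | exact hm14 | exact hm21 | exact hm31
            | exact hm41 | exact hm34 | exact hm43 | exact hm23 | exact hm24
            | exact hm32 | exact hm42
      intro x y
      have := congrFun (congrArg DFunLike.coe (congrFun (congrArg DFunLike.coe hz) x)) y
      simp only [LinearMap.compr₂_apply, LinearMap.zero_apply] at this
      rwa [← Submodule.Quotient.mk_eq_zero, ← Submodule.mkQ_apply]
    have hgen : ∀ u ∈ ({b 1, b 2, b 3} : Set V), ∀ v ∈ ({b 1, b 2, b 3} : Set V),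
        μ u v ∈ U := by
      intro u hu v hv
      rcases hu with rfl | rfl | rfl <;> rcases hv with rfl | rfl | rfl <;>
        simp only [hself, h23, h24, h32, h42, h34, h43] <;>
        first
          | exact U.zero_mem
          | exact U.smul_mem _ (Submodule.subset_span rfl)
          | exact U.neg_mem (U.smul_mem _ (Submodule.subset_span rfl))
    have hB : ∀ u ∈ W, ∀ v ∈ W, μ u v ∈ U := by
      intro u hu
      induction hu using Submodule.span_induction with
      | mem x hx =>
          intro v hv
          induction hv using Submodule.span_induction with
          | mem y hy => exact hgen x hx y hy
          | zero => simp
          | add y z _ _ hy hz => rw [map_add]; exact U.add_mem hy hz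
          | smul r y _ hy => rw [map_smul]; exact U.smul_mem _ hy
      | zero => intro v _; simp
      | add x y _ _ hx hy =>
          intro v hv
          rw [map_add, LinearMap.add_apply]
          exact U.add_mem (hx v hv) (hy v hv)
      | smul r x _ hx =>
          intro v hv
          rw [map_smul, LinearMap.smul_apply]
          exact U.smul_mem _ (hx v hv)
    have hC : ∀ u ∈ U, ∀ v ∈ U, μ u v = 0 := by
      intro u hu v hv
      rw [hU, Submodule.mem_span_singleton] at hu hv
      obtain ⟨r, rfl⟩ := hu
      obtain ⟨s, rfl⟩ := hv
      simp [hself]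
    intro x1 x2 x3 x4 x5 x6 x7 x8
    exact hC _ (hB _ (hA x1 x2) _ (hA x3 x4)) _ (hB _ (hA x5 x6) _ (hA x7 x8))
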